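/- For every k ∈ ℕ and every real x with |x| ≥ √(2k+1), the k-th physicists' Hermite polynomial satisfies |H_k(x)| ≤ 2^k |x|^k. -/
import Mathlib


noncomputable section

/-- The `k`-th physicists' Hermite polynomial, as a function:
`H_k(x) = (-1)^k e^{x²} (d/dx)^k (e^{-x²})`. -/
def hermitePoly (k : ℕ) (x : ℝ) : ℝ :=
  (-1 : ℝ) ^ k * Real.exp (x ^ 2) * iteratedDeriv k (fun y => Real.exp (-(y ^ 2))) x

end

open Polynomial

/-- The probabilists' Hermite polynomial as a real function. -/
noncomputable def He (n : ℕ) (y : ℝ) : ℝ := aeval y (hermite n)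

lemma derivative_hermite_eq (n : ℕ) :
    derivative (hermite (n + 1)) = C ((n : ℤ) + 1) * hermite n := by
  induction n with
  | zero => simp [hermite_one, hermite_zero]
  | succ n ih =>
    rw [hermite_succ (n + 1), derivative_sub, derivative_mul, derivative_X, ih,
      derivative_mul, derivative_C, hermite_succ n]
    simp only [Nat.cast_add, Nat.cast_one, map_add, C_1]
    ring

lemma He_rec (n : ℕ) (y : ℝ) :
    He (n + 2) y = y * He (n + 1) y - (n + 1) * He n y := by
  simp only [He, hermite_succ (n + 1), derivative_hermite_eq, map_sub, map_mul, aeval_X, aeval_C]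
  push_cast
  ring

lemma He_parity (n : ℕ) : ∀ y : ℝ, He n (-y) = (-1) ^ n * He n y := by
  induction n using Nat.strong_induction_on with
  | _ n ih =>
    match n with
    | 0 => intro y; simp [He, hermite_zero]
    | 1 => intro y; simp [He, hermite_one]
    | (n + 2) =>
      intro y
      rw [He_rec, He_rec, ih (n + 1) (by omega), ih n (by omega)]
      ring

lemma He_key (n : ℕ) : ∀ y : ℝ, 0 ≤ y → 4 * n + 2 ≤ y ^ 2 →
    0 ≤ He n y ∧ y * He n y ≤ 2 * He (n + 1) y ∧ He (n + 1) y ≤ y * He n y := by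
  induction n with
  | zero =>
    intro y hy h
    have h0 : He 0 y = 1 := by simp [He, hermite_zero]
    have h1 : He 1 y = y := by simp [He, hermite_one]
    rw [h0, h1]
    refine ⟨by norm_num, by linarith, by linarith⟩
  | succ n ih =>
    intro y hy h
    have h' : 4 * (n : ℝ) + 2 ≤ y ^ 2 := by push_cast at h ⊢; linarith
    obtain ⟨h0, h1, h2⟩ := ih y hy (by push_cast at h ⊢; linarith)
    have hrec := He_rec n y
    have hyHn : 0 ≤ y * He n y := mul_nonneg hy h0
    have h0' : 0 ≤ He (n + 1) y := by linarith
    have hmul : y * (y * He n y) ≤ y * (2 * He (n + 1) y) :=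
      mul_le_mul_of_nonneg_left h1 hy
    have hsq : (4 * (n : ℝ) + 6) * He n y ≤ y ^ 2 * He n y := by
      push_cast at h
      nlinarith
    refine ⟨h0', ?_, ?_⟩
    · rw [hrec]; push_cast; nlinarith
    · rw [hrec]
      have : 0 ≤ ((n : ℝ) + 1) * He n y := by positivity
      push_cast
      linarith

lemma He_upper (n : ℕ) : ∀ y : ℝ, 0 ≤ y → 4 * n + 2 ≤ y ^ 2 → He n y ≤ y ^ n := by
  induction n with
  | zero => intro y hy h; simp [He, hermite_zero]
  | succ n ih =>
    intro y hy h
    have h' : 4 * (n : ℝ) + 2 ≤ y ^ 2 := by push_cast at h ⊢; linarith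
    obtain ⟨h0, _, h2⟩ := He_key n y hy h'
    calc He (n + 1) y ≤ y * He n y := h2
      _ ≤ y * y ^ n := mul_le_mul_of_nonneg_left (ih y hy h') hy
      _ = y ^ (n + 1) := (pow_succ' y n).symm

lemma abs_He_le (k : ℕ) (y : ℝ) (h : 4 * k + 2 ≤ y ^ 2) : |He k y| ≤ |y| ^ k := by
  rcases le_or_gt 0 y with hy | hy
  · rw [abs_of_nonneg (He_key k y hy h).1, abs_of_nonneg hy]
    exact He_upper k y hy h
  · have hy' : (0 : ℝ) ≤ -y := by linarith
    have h' : 4 * k + 2 ≤ (-y) ^ 2 := by rw [neg_sq]; exact h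
    have hp : He k y = (-1) ^ k * He k (-y) := by
      have := He_parity k (-y); rw [neg_neg] at this; exact this
    rw [hp, abs_mul, abs_pow, abs_neg, abs_one, one_pow, one_mul,
      abs_of_nonneg (He_key k (-y) hy' h').1, abs_of_neg hy]
    exact He_upper k (-y) hy' h'

lemma hermitePoly_eq (k : ℕ) (x : ℝ) :
    hermitePoly k x = (Real.sqrt 2) ^ k * He k (Real.sqrt 2 * x) := by
  have hs2 : (Real.sqrt 2) ^ 2 = 2 := Real.sq_sqrt (by norm_num)
  have hfun : (fun y : ℝ => Real.exp (-(y ^ 2))) =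
      fun y : ℝ => Real.exp (-((Real.sqrt 2 * y) ^ 2 / 2)) := by
    funext y
    rw [mul_pow, hs2]
    ring_nf
  have hg : ContDiff ℝ (k : ℕ∞) (fun y : ℝ => Real.exp (-(y ^ 2 / 2))) := by
    apply ContDiff.exp
    apply ContDiff.neg
    exact (contDiff_id.pow 2).div_const 2
  have hcomp := iteratedDeriv_comp_const_mul hg (Real.sqrt 2)
  have hiter : iteratedDeriv k (fun y : ℝ => Real.exp (-(y ^ 2))) x =
      (Real.sqrt 2) ^ k * iteratedDeriv k (fun y : ℝ => Real.exp (-(y ^ 2 / 2)))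
        (Real.sqrt 2 * x) := by
    rw [hfun]
    exact congrFun hcomp x
  have hgauss : iteratedDeriv k (fun y : ℝ => Real.exp (-(y ^ 2 / 2))) (Real.sqrt 2 * x) =
      (-1 : ℝ) ^ k * aeval (Real.sqrt 2 * x) (hermite k) *
        Real.exp (-((Real.sqrt 2 * x) ^ 2 / 2)) := by
    rw [iteratedDeriv_eq_iterate]
    exact deriv_gaussian_eq_hermite_mul_gaussian k (Real.sqrt 2 * x)
  have hx2 : -((Real.sqrt 2 * x) ^ 2 / 2) = -(x ^ 2) := by rw [mul_pow, hs2]; ring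
  have hexp : Real.exp (x ^ 2) * Real.exp (-(x ^ 2)) = 1 := by
    rw [← Real.exp_add]; simp
  have hsign : (-1 : ℝ) ^ k * (-1 : ℝ) ^ k = 1 := by
    rw [← pow_add]; exact (neg_one_pow_eq_one_iff_even (by norm_num)).2 ⟨k, rfl⟩
  have key : ∀ A : ℝ, (-1 : ℝ) ^ k * Real.exp (x ^ 2) *
      ((Real.sqrt 2) ^ k * ((-1 : ℝ) ^ k * A * Real.exp (-(x ^ 2)))) =
      (Real.sqrt 2) ^ k * A := by
    intro A
    have : (-1 : ℝ) ^ k * Real.exp (x ^ 2) *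
        ((Real.sqrt 2) ^ k * ((-1 : ℝ) ^ k * A * Real.exp (-(x ^ 2)))) =
        ((-1 : ℝ) ^ k * (-1 : ℝ) ^ k) * (Real.exp (x ^ 2) * Real.exp (-(x ^ 2))) *
          ((Real.sqrt 2) ^ k * A) := by ring
    rw [this, hsign, hexp, one_mul, one_mul]
  rw [hermitePoly, hiter, hgauss, hx2, He]
  exact key _

/-- **Bound for Hermite polynomials beyond their largest root.** For every `k ∈ ℕ` and
every `x ∈ ℝ` with `|x| ≥ √(2k+1)`, one has `|H_k(x)| ≤ 2^k |x|^k`. -/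
theorem hermite_poly_bound (k : ℕ) (x : ℝ) (hx : Real.sqrt (2 * k + 1) ≤ |x|) :
    |hermitePoly k x| ≤ 2 ^ k * |x| ^ k := by
  have hx2 : 2 * (k : ℝ) + 1 ≤ x ^ 2 := by
    have h1 : (Real.sqrt (2 * k + 1)) ^ 2 ≤ |x| ^ 2 :=
      pow_le_pow_left₀ (Real.sqrt_nonneg _) hx 2
    rw [Real.sq_sqrt (by positivity), sq_abs] at h1
    exact h1
  set y := Real.sqrt 2 * x with hy
  have hy2 : 4 * (k : ℝ) + 2 ≤ y ^ 2 := by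
    have : y ^ 2 = 2 * x ^ 2 := by
      rw [hy, mul_pow, Real.sq_sqrt (by norm_num : (0:ℝ) ≤ 2)]
    rw [this]; linarith
  have habs := abs_He_le k y hy2
  rw [hermitePoly_eq k x, abs_mul, abs_pow, abs_of_nonneg (Real.sqrt_nonneg 2)]
  calc (Real.sqrt 2) ^ k * |He k y| ≤ (Real.sqrt 2) ^ k * |y| ^ k := by
        apply mul_le_mul_of_nonneg_left habs; positivity
    _ = (Real.sqrt 2 * |y|) ^ k := (mul_pow _ _ _).symm
    _ = 2 ^ k * |x| ^ k := by
        rw [hy, abs_mul, abs_of_nonneg (Real.sqrt_nonneg 2), ← mul_assoc,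
          ← Real.sqrt_mul_self (by norm_num : (0:ℝ) ≤ 2)]
        rw [mul_pow]
        norm_num [Real.sqrt_mul_self]
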